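/- arXiv:1308.4599 — 4 statements merged into one kernel-verified Lean document; each statement's English description precedes it below -/
import Mathlib

section
/- Let G and H be simple graphs and let p be a function assigning to each vertex of G a (possibly empty) set of vertices of H, such that whenever u and v are adjacent in G, every x ∈ p(u) and every y ∈ p(v) satisfy x = y or x and y are adjacent in H. Let A and B be sets of vertices of G and let m be a natural number such that for every a ∈ A, b ∈ B, x ∈ p(a) and y ∈ p(b), every walk in H from x to y has length at least m. Then for every a ∈ A and b ∈ B, every walk in G from a to b whose length is strictly less than m contains in its support a vertex v with p(v) = ∅. -/
private lemma aux_walk {V W : Type*} {G : SimpleGraph V} {H : SimpleGraph W}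
    {p : V → Set W}
    (hp : ∀ u v : V, G.Adj u v → ∀ x ∈ p u, ∀ y ∈ p v, x = y ∨ H.Adj x y) :
    ∀ {a b : V} (w : G.Walk a b), (∀ v ∈ w.support, (p v).Nonempty) →
      ∀ x ∈ p a, ∃ y ∈ p b, ∃ q : H.Walk x y, q.length ≤ w.length := by
  intro a b w
  induction w with
  | nil =>
    intro _ x hx
    exact ⟨x, hx, SimpleGraph.Walk.nil, le_refl _⟩
  | @cons a c b h w ih =>
    intro hsupp x hx
    obtain ⟨z, hz⟩ := hsupp c (by simp [SimpleGraph.Walk.support_cons])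
    have hsupp' : ∀ v ∈ w.support, (p v).Nonempty := fun v hv =>
      hsupp v (by simp [SimpleGraph.Walk.support_cons, hv])
    obtain ⟨y, hy, q, hq⟩ := ih hsupp' z hz
    rcases hp a c h x hx z hz with rfl | hadj
    · exact ⟨y, hy, q, by simp [SimpleGraph.Walk.length_cons]; omega⟩
    · exact ⟨y, hy, SimpleGraph.Walk.cons hadj q, by
        simp [SimpleGraph.Walk.length_cons]; omega⟩

/-- Combinatorial core of the subsurface-projection lemma: if all projection
points of `A` and `B` are at walk-distance at least `m` in `H`, then every
walk in `G` from `A` to `B` of length `< m` has a vertex with empty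
projection in its support. -/
theorem stmt_0 {V W : Type*} (G : SimpleGraph V) (H : SimpleGraph W)
    (p : V → Set W)
    (hp : ∀ u v : V, G.Adj u v → ∀ x ∈ p u, ∀ y ∈ p v, x = y ∨ H.Adj x y)
    (A B : Set V) (m : ℕ)
    (hm : ∀ a ∈ A, ∀ b ∈ B, ∀ x ∈ p a, ∀ y ∈ p b,
      ∀ q : H.Walk x y, m ≤ q.length) :
    ∀ a ∈ A, ∀ b ∈ B, ∀ w : G.Walk a b, w.length < m →
      ∃ v ∈ w.support, p v = ∅ := by
  intro a ha b hb w hlen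
  by_contra hcon
  push_neg at hcon
  have hne : ∀ v ∈ w.support, (p v).Nonempty := fun v hv =>
    hcon v hv
  obtain ⟨x, hx⟩ := hne a w.start_mem_support
  obtain ⟨y, hy, q, hq⟩ := aux_walk hp w hne x hx
  exact absurd (hm a ha b hb x hx y hy q) (by omega)
end

section
/- Let G and H be simple graphs and let p be a function assigning to each vertex of G a (possibly empty) set of vertices of H, such that whenever u and v are adjacent in G, every x ∈ p(u) and every y ∈ p(v) satisfy x = y or x and y are adjacent in H. Suppose there is a vertex w of G such that for every vertex v of G, p(v) = ∅ if and only if v = w. Let a and b be vertices of G and let m be a natural number such that for every x ∈ p(a) and y ∈ p(b), every walk in H from x to y has length at least m. Then every walk in G from a to b whose length is strictly less than m contains w in its support. -/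
lemma stmt_1_aux {V W : Type*} (G : SimpleGraph V) (H : SimpleGraph W)
    (p : V → Set W)
    (hp : ∀ u v : V, G.Adj u v → ∀ x ∈ p u, ∀ y ∈ p v, x = y ∨ H.Adj x y)
    (w : V) (hw : ∀ v : V, p v = ∅ ↔ v = w) :
    ∀ {a b : V} (q : G.Walk a b), w ∉ q.support →
      ∃ x ∈ p a, ∃ y ∈ p b, ∃ r : H.Walk x y, r.length ≤ q.length := by
  intro a b q
  induction q with
  | nil =>
    rename_i u
    intro hns
    have ha : p u ≠ ∅ := fun h => hns (by simp [(hw u).mp h])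
    obtain ⟨x, hx⟩ := Set.nonempty_iff_ne_empty.mpr ha
    exact ⟨x, hx, x, hx, SimpleGraph.Walk.nil, le_refl _⟩
  | cons hadj q' ih =>
    rename_i u c d
    intro hns
    rw [SimpleGraph.Walk.support_cons] at hns
    have hu : u ≠ w := fun h => hns (by simp [h])
    have hns' : w ∉ q'.support := fun h => hns (by simp [h])
    obtain ⟨x', hx', y, hy, r, hr⟩ := ih hns'
    have ha : p u ≠ ∅ := fun h => hu ((hw u).mp h)
    obtain ⟨x, hx⟩ := Set.nonempty_iff_ne_empty.mpr ha
    rcases hp u c hadj x hx x' hx' with heq | hAdj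
    · subst heq
      exact ⟨x, hx, y, hy, r, by simpa using Nat.le_succ_of_le hr⟩
    · exact ⟨x, hx, y, hy, SimpleGraph.Walk.cons hAdj r, by simpa using hr⟩

/-- If the only vertex of `G` with empty projection is `w`, and all projection
points of `a` and `b` are at walk-distance at least `m` in `H`, then every
walk in `G` from `a` to `b` of length `< m` contains `w` in its support. -/
theorem stmt_1 {V W : Type*} (G : SimpleGraph V) (H : SimpleGraph W)
    (p : V → Set W)
    (hp : ∀ u v : V, G.Adj u v → ∀ x ∈ p u, ∀ y ∈ p v, x = y ∨ H.Adj x y)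
    (w : V) (hw : ∀ v : V, p v = ∅ ↔ v = w)
    (a b : V) (m : ℕ)
    (hm : ∀ x ∈ p a, ∀ y ∈ p b, ∀ q : H.Walk x y, m ≤ q.length) :
    ∀ q : G.Walk a b, q.length < m → w ∈ q.support := by
  intro q hq
  by_contra hns
  obtain ⟨x, hx, y, hy, r, hr⟩ := stmt_1_aux G H p hp w hw q hns
  exact absurd (hm x hx y hy r) (by omega)
end

section
/- Let G and H be simple graphs and let p be a function assigning to each vertex of G a (possibly empty) set of vertices of H, such that whenever u and v are adjacent in G, every x ∈ p(u) and every y ∈ p(v) satisfy x = y or x and y are adjacent in H. Let W be a walk in G from a to b such that p(v) is nonempty for every vertex v in the support of W. Then there exist x ∈ p(a), y ∈ p(b), and a walk in H from x to y whose length is at most the length of W. -/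
theorem stmt_2_aux {V W : Type*} (G : SimpleGraph V) (H : SimpleGraph W)
    (p : V → Set W)
    (hp : ∀ u v : V, G.Adj u v → ∀ x ∈ p u, ∀ y ∈ p v, x = y ∨ H.Adj x y) :
    ∀ {a b : V} (w : G.Walk a b),
      (∀ v ∈ w.support, (p v).Nonempty) →
      ∃ x ∈ p a, ∃ y ∈ p b, ∃ q : H.Walk x y, q.length ≤ w.length := by
  intro a b w
  induction w with
  | nil =>
    intro hne
    obtain ⟨x, hx⟩ := hne _ (SimpleGraph.Walk.start_mem_support _)
    exact ⟨x, hx, x, hx, SimpleGraph.Walk.nil, by simp⟩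
  | @cons u v c huv w ih =>
    intro hne
    obtain ⟨y, hy, z, hz, q, hq⟩ := ih (fun d hd => hne d (by simp [hd]))
    obtain ⟨x, hx⟩ := hne u (by simp)
    rcases hp u v huv x hx y hy with h | h
    · subst h
      exact ⟨x, hx, z, hz, q, by simp; omega⟩
    · exact ⟨x, hx, z, hz, q.cons h, by simpa using hq⟩

/-- The chain construction: a walk in `G` all of whose vertices have nonempty
projection yields a walk in `H` between projection points of its endpoints,
of at most the same length. -/
theorem stmt_2 {V W : Type*} (G : SimpleGraph V) (H : SimpleGraph W)
    (p : V → Set W)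
    (hp : ∀ u v : V, G.Adj u v → ∀ x ∈ p u, ∀ y ∈ p v, x = y ∨ H.Adj x y)
    (a b : V) (w : G.Walk a b)
    (hne : ∀ v ∈ w.support, (p v).Nonempty) :
    ∃ x ∈ p a, ∃ y ∈ p b, ∃ q : H.Walk x y, q.length ≤ w.length :=
  stmt_2_aux G H p hp w hne
end

section
/- Let G be a simple graph and let W be a walk in G from a to b. Suppose w_1, …, w_m are m pairwise distinct vertices of G, each contained in the support of W, such that no two of them are adjacent in G and each w_i is different from both a and b. Then the length of W is at least 2m. -/
private lemma aux3 {V : Type*} [DecidableEq V] (G : SimpleGraph V) :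
    ∀ n : ℕ, ∀ a b : V, ∀ W : G.Walk a b, W.length ≤ n →
    ∀ s : Finset V, (∀ v ∈ s, v ∈ W.support) →
    (∀ u ∈ s, ∀ v ∈ s, u ≠ v → ¬ G.Adj u v) →
    (∀ v ∈ s, v ≠ a) → (∀ v ∈ s, v ≠ b) →
    2 * s.card ≤ W.length := by
  intro n
  induction n with
  | zero =>
    intro a b W hW s hsupp _ hna _
    cases W with
    | nil =>
      have hcard : s = ∅ := by
        apply Finset.eq_empty_of_forall_notMem
        intro v hv
        have := hsupp v hv
        simp at this
        exact hna v hv this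
      simp [hcard]
    | cons h W' => simp at hW
  | succ n ih =>
    intro a b W hW s hsupp hind hna hnb
    rcases Finset.eq_empty_or_nonempty s with rfl | ⟨v0, hv0⟩
    · simp
    cases W with
    | nil =>
      exfalso
      have := hsupp v0 hv0
      simp at this
      exact hna v0 hv0 this
    | cons h W' =>
      rename_i c
      by_cases hc : c ∈ s
      · cases W' with
        | nil =>
          exact absurd rfl (hnb _ hc)
        | cons h2 W'' =>
          rename_i c'
          have hsub : ∀ v ∈ s.erase c, v ∈ W''.support := by
            intro v hv
            have hvs := Finset.mem_of_mem_erase hv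
            have hvc := Finset.ne_of_mem_erase hv
            have := hsupp v hvs
            simp only [SimpleGraph.Walk.support_cons, List.mem_cons] at this
            rcases this with h1 | h1 | h1
            · exact absurd h1 (hna v hvs)
            · exact absurd h1 hvc
            · exact h1
          have hlen : W''.length ≤ n := by
            simp only [SimpleGraph.Walk.length_cons] at hW
            omega
          have key := ih c' b W'' hlen (s.erase c) hsub
            (fun u hu v hv huv => hind u (Finset.mem_of_mem_erase hu) v (Finset.mem_of_mem_erase hv) huv)
            (fun v hv => by
              intro hvc'
              have hvs := Finset.mem_of_mem_erase hv
              have hvc := Finset.ne_of_mem_erase hv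
              exact hind c hc v hvs (Ne.symm hvc) (hvc' ▸ h2))
            (fun v hv => hnb v (Finset.mem_of_mem_erase hv))
          have hcard : s.card = (s.erase c).card + 1 := by
            rw [Finset.card_erase_of_mem hc]
            have : 1 ≤ s.card := Finset.card_pos.mpr ⟨c, hc⟩
            omega
          simp only [SimpleGraph.Walk.length_cons]
          omega
      · have hsub : ∀ v ∈ s, v ∈ W'.support := by
          intro v hv
          have := hsupp v hv
          simp only [SimpleGraph.Walk.support_cons, List.mem_cons] at this
          rcases this with h1 | h1
          · exact absurd h1 (hna v hv)
          · exact h1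
        have hlen : W'.length ≤ n := by
          simp only [SimpleGraph.Walk.length_cons] at hW
          omega
        have key := ih c b W' hlen s hsub hind
          (fun v hv => by rintro rfl; exact hc hv) hnb
        simp only [SimpleGraph.Walk.length_cons]
        omega

/-- A walk from `a` to `b` passing through `m` pairwise distinct, pairwise
non-adjacent vertices, each different from `a` and `b`, has length at
least `2 * m`. -/
theorem stmt_3 {V : Type*} (G : SimpleGraph V) (a b : V) (W : G.Walk a b)
    (m : ℕ) (w : Fin m → V)
    (hinj : Function.Injective w)
    (hsupp : ∀ i : Fin m, w i ∈ W.support)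
    (hnadj : ∀ i j : Fin m, i ≠ j → ¬ G.Adj (w i) (w j))
    (hends : ∀ i : Fin m, w i ≠ a ∧ w i ≠ b) :
    2 * m ≤ W.length := by
  classical
  set s : Finset V := Finset.image w Finset.univ with hs
  have hcard : s.card = m := by
    rw [hs, Finset.card_image_of_injective _ hinj, Finset.card_univ, Fintype.card_fin]
  have := aux3 G W.length a b W le_rfl s
    (by rintro v hv; rw [hs] at hv; simp at hv; obtain ⟨i, rfl⟩ := hv; exact hsupp i)
    (by
      rintro u hu v hv huv
      rw [hs] at hu hv; simp at hu hv
      obtain ⟨i, rfl⟩ := hu; obtain ⟨j, rfl⟩ := hv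
      exact hnadj i j (fun hij => huv (hij ▸ rfl)))
    (by rintro v hv; rw [hs] at hv; simp at hv; obtain ⟨i, rfl⟩ := hv; exact (hends i).1)
    (by rintro v hv; rw [hs] at hv; simp at hv; obtain ⟨i, rfl⟩ := hv; exact (hends i).2)
  omega
end
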